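/- Let $(X,d)$ and $(Y,\rho)$ be metric spaces, $s>0$, let $f\colon X\to Y$ be Lipschitz, and let $V\subset X$ be a Borel set such that for $\mathcal{H}^s$-almost every $x\in V$ there exists $0<\lambda_x\le 1$ with $\limsup_{r\to 0} \mathcal{H}^s\big(B(f(x),\lambda_x r)\setminus f(V\cap B(x,r))\big)/(2\lambda_x r)^s < \tfrac12\,\Theta^s_*(Y,f(x))$. If $\mathcal{H}^s(V)>0$, then $\mathcal{H}^s(f(V))>0$. -/

import Mathlib

open MeasureTheory Metric Filter Set
open scoped ENNReal Topology NNReal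

lemma map_mul_nhdsGT_zero {lx : ℝ} (h : 0 < lx) :
    Filter.map (fun r : ℝ => lx * r) (𝓝[>] (0:ℝ)) = 𝓝[>] (0:ℝ) := by
  have h2 := (Homeomorph.mulLeft₀ lx h.ne').isEmbedding.map_nhdsWithin_eq (Ioi (0:ℝ)) 0
  have himg : (fun r : ℝ => lx * r) '' Ioi 0 = Ioi 0 := by
    ext y
    constructor
    · rintro ⟨r, hr, rfl⟩; exact mul_pos h hr
    · intro hy; exact ⟨y / lx, div_pos hy h, by field_simp⟩
  rw [Homeomorph.coe_mulLeft₀] at h2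
  simpa [himg] using h2

/-- If `f` is Lipschitz and a.e. point of the Borel set `V` satisfies the David-type
limsup inequality relative to `V`, then `μH[s] V > 0` implies `μH[s] (f '' V) > 0`. -/
theorem image_pos_measure_of_david
    {X Y : Type*} [MetricSpace X] [MeasurableSpace X] [BorelSpace X]
    [MetricSpace Y] [MeasurableSpace Y] [BorelSpace Y]
    {s : ℝ} (hs : 0 < s) (f : X → Y)
    (hlip : ∃ L : ℝ≥0, LipschitzWith L f)
    (V : Set X) (hV : MeasurableSet V)
    (hdens : ∀ᵐ x ∂(μH[s] : Measure X), x ∈ V → ∃ lx : ℝ, 0 < lx ∧ lx ≤ 1 ∧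
      Filter.limsup (fun r : ℝ =>
          μH[s] (closedBall (f x) (lx * r) \ f '' (V ∩ closedBall x r))
            / ENNReal.ofReal ((2 * lx * r) ^ s)) (𝓝[>] (0 : ℝ))
        < (1 / 2) * Filter.liminf (fun r : ℝ =>
            μH[s] (closedBall (f x) r) / ENNReal.ofReal ((2 * r) ^ s)) (𝓝[>] (0 : ℝ)))
    (hpos : 0 < μH[s] V) :
    0 < μH[s] (f '' V) := by
  by_contra hcon
  have h0 : μH[s] (f '' V) = 0 := by simpa using (not_lt.mp hcon)
  -- find a point of V satisfying the density condition
  obtain ⟨x, hxV, lx, hl0, hl1, hlt⟩ : ∃ x, x ∈ V ∧ ∃ lx : ℝ, 0 < lx ∧ lx ≤ 1 ∧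
      Filter.limsup (fun r : ℝ =>
          μH[s] (closedBall (f x) (lx * r) \ f '' (V ∩ closedBall x r))
            / ENNReal.ofReal ((2 * lx * r) ^ s)) (𝓝[>] (0 : ℝ))
        < (1 / 2) * Filter.liminf (fun r : ℝ =>
            μH[s] (closedBall (f x) r) / ENNReal.ofReal ((2 * r) ^ s)) (𝓝[>] (0 : ℝ)) := by
    by_contra hne
    push_neg at hne
    have hsub : V ⊆ {x | ¬ (x ∈ V → ∃ lx : ℝ, 0 < lx ∧ lx ≤ 1 ∧
        Filter.limsup (fun r : ℝ =>
            μH[s] (closedBall (f x) (lx * r) \ f '' (V ∩ closedBall x r))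
              / ENNReal.ofReal ((2 * lx * r) ^ s)) (𝓝[>] (0 : ℝ))
          < (1 / 2) * Filter.liminf (fun r : ℝ =>
              μH[s] (closedBall (f x) r) / ENNReal.ofReal ((2 * r) ^ s)) (𝓝[>] (0 : ℝ)))} := by
      intro x hx
      simp only [mem_setOf_eq, not_forall]
      refine ⟨hx, ?_⟩
      rintro ⟨lx, a, b, c⟩
      exact absurd c (by simpa using (hne x hx lx a b))
    have : μH[s] V = 0 :=
      measure_mono_null hsub (by simpa [ae_iff] using hdens)
    exact absurd this hpos.ne'
  -- the function in the limsup equals the ball-density composed with scaling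
  set g : ℝ → ℝ≥0∞ := fun r => μH[s] (closedBall (f x) r) / ENNReal.ofReal ((2 * r) ^ s) with hg
  have hfun : (fun r : ℝ =>
      μH[s] (closedBall (f x) (lx * r) \ f '' (V ∩ closedBall x r))
        / ENNReal.ofReal ((2 * lx * r) ^ s)) = fun r => g (lx * r) := by
    funext r
    have hnull : μH[s] (f '' (V ∩ closedBall x r)) = 0 :=
      measure_mono_null (image_mono (f := f) inter_subset_left) h0
    rw [measure_diff_null hnull, hg]
    ring_nf
  have hmap : Filter.limsup (fun r => g (lx * r)) (𝓝[>] (0:ℝ)) = Filter.limsup g (𝓝[>] (0:ℝ)) := by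
    rw [show (fun r => g (lx * r)) = g ∘ (fun r => lx * r) from rfl, Filter.limsup_comp,
      map_mul_nhdsGT_zero hl0]
  rw [hfun, hmap] at hlt
  have hle : Filter.liminf g (𝓝[>] (0:ℝ)) ≤ Filter.limsup g (𝓝[>] (0:ℝ)) :=
    liminf_le_limsup
  have hhalf : (1 / 2 : ℝ≥0∞) * Filter.liminf g (𝓝[>] (0:ℝ)) ≤ Filter.liminf g (𝓝[>] (0:ℝ)) :=
    mul_le_of_le_one_left zero_le (by norm_num)
  exact absurd (lt_of_lt_of_le hlt (hhalf.trans hle)) (lt_irrefl _)
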